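/- arXiv:2505.12868 — 2 statements merged into one kernel-verified Lean document; each statement's English description precedes it below -/
import Mathlib

section
/- Let ε and (δᵉ)_{e∈ℰ} be random vectors on a common probability space with values in ℝⁿ, where ℰ is a finite index set containing a distinguished element 0 with δ⁰ = 0 almost surely. Assume ε has zero mean and finite second moments, each δᵉ has finite second moments and is independent of ε, and let ωᵉ > 0 with Σ_{e∈ℰ} ωᵉ = 1 and γ ≥ 0. Set Sᵉ = Cov(δᵉ), μᵉ = E[δᵉ], and K = S⁰ + γ Σ_{e∈ℰ} ωᵉ (Sᵉ − S⁰ + μᵉ(μᵉ)ᵀ). Then for every w ∈ ℝⁿ, the supremum over all Borel probability measures μ on ℝⁿ with finite second moments satisfying ∫ y yᵀ dμ(y) ⪯ K (Loewner order) of ∫∫ ⟨w, x + y⟩² d(law ε)(x) dμ(y) equals E[⟨w, ε + δ⁰⟩²] + γ Σ_{e∈ℰ} ωᵉ ( E[⟨w, ε + δᵉ⟩²] − E[⟨w, ε + δ⁰⟩²] ). -/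
open scoped Matrix
open MeasureTheory ProbabilityTheory

private lemma l2_mul_int {α : Type*} [MeasurableSpace α] {μ : Measure α} {f g : α → ℝ}
    (hf : MemLp f 2 μ) (hg : MemLp g 2 μ) : Integrable (fun ω => f ω * g ω) μ := by
  have h : MemLp (g • f) 1 μ := by
    haveI : ENNReal.HolderTriple 2 2 1 := ⟨by simp [ENNReal.inv_two_add_inv_two]⟩
    exact hf.smul hg
  have h2 : Integrable (g • f) μ := memLp_one_iff_integrable.mp h
  exact (by simpa [Pi.smul_apply, smul_eq_mul, mul_comm] using h2 : Integrable (f * g) μ)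

private lemma dot_memℒp {α : Type*} [MeasurableSpace α] {μ : Measure α} {n : ℕ}
    (w : Fin n → ℝ) (f : α → Fin n → ℝ) (hf : ∀ i, MemLp (fun a => f a i) 2 μ) :
    MemLp (fun a => w ⬝ᵥ f a) 2 μ := by
  have : (fun a => w ⬝ᵥ f a) = fun a => ∑ i, w i * f a i := by
    funext a; simp [dotProduct]
  rw [this]
  exact memLp_finset_sum _ fun i _ => (hf i).const_mul (w i)

private lemma int_dot_sq {α : Type*} [MeasurableSpace α] (μ : Measure α)
    {n : ℕ} (w : Fin n → ℝ) (f : α → Fin n → ℝ) (hf : ∀ i, MemLp (fun a => f a i) 2 μ) :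
    ∫ a, (w ⬝ᵥ f a) ^ 2 ∂μ = ∑ i, ∑ j, w i * w j * ∫ a, f a i * f a j ∂μ := by
  have key : ∀ a, (w ⬝ᵥ f a) ^ 2 = ∑ i, ∑ j, w i * w j * (f a i * f a j) := by
    intro a
    simp only [dotProduct, sq, Finset.sum_mul_sum]
    exact Finset.sum_congr rfl fun i _ => Finset.sum_congr rfl fun j _ => by ring
  simp only [key]
  rw [integral_finset_sum _ fun i _ => integrable_finset_sum _ fun j _ =>
    ((l2_mul_int (hf i) (hf j)).const_mul _)]
  exact Finset.sum_congr rfl fun i _ => by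
    rw [integral_finset_sum _ fun j _ => ((l2_mul_int (hf i) (hf j)).const_mul _)]
    exact Finset.sum_congr rfl fun j _ => MeasureTheory.integral_const_mul _ _

private lemma dot_mulVec_sum {n : ℕ} (A : Matrix (Fin n) (Fin n) ℝ) (x v : Fin n → ℝ) :
    x ⬝ᵥ (A *ᵥ v) = ∑ i, ∑ j, x i * v j * A i j := by
  simp only [dotProduct, Matrix.mulVec, Finset.mul_sum]
  exact Finset.sum_congr rfl fun i _ => Finset.sum_congr rfl fun j _ => by ring

private lemma rank1_quad {n : ℕ} (a x : Fin n → ℝ) :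
    x ⬝ᵥ ((Matrix.of fun i j => a i * a j) *ᵥ x) = (x ⬝ᵥ a) ^ 2 := by
  rw [dot_mulVec_sum]
  simp only [dotProduct, sq, Finset.sum_mul_sum, Matrix.of_apply]
  exact Finset.sum_congr rfl fun i _ => Finset.sum_congr rfl fun j _ => by ring

private lemma exp_sq_add {α : Type*} [MeasurableSpace α] {μ : Measure α} {f g : α → ℝ}
    (hf : MemLp f 2 μ) (hg : MemLp g 2 μ)
    (hfg : Integrable (fun a => f a * g a) μ) :
    ∫ a, (f a + g a) ^ 2 ∂μ
      = ∫ a, (f a) ^ 2 ∂μ + 2 * ∫ a, f a * g a ∂μ + ∫ a, (g a) ^ 2 ∂μ := by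
  have h1 := hf.integrable_sq
  have h2 := hfg.const_mul 2
  have h3 := hg.integrable_sq
  have key : ∀ a, (f a + g a) ^ 2 = (f a) ^ 2 + (2 * (f a * g a) + (g a) ^ 2) := fun a => by ring
  simp only [key]
  have h23 : Integrable (fun a => 2 * (f a * g a) + (g a) ^ 2) μ := h2.add h3
  rw [integral_add h1 h23, integral_add h2 h3, MeasureTheory.integral_const_mul]
  ring

/-- Proposition 1 of the paper, in residual form: with `ε` the structural noise
(zero mean, finite second moments), `δᵉ` the training interventions (finite second moments,
independent of `ε`, `δ⁰ = 0` a.s.), weights `ωᵉ > 0` summing to one and `γ ≥ 0`, set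
`Sᵉ = Cov(δᵉ)`, `μᵉ = E[δᵉ]` and `K = S⁰ + γ Σₑ ωᵉ (Sᵉ − S⁰ + μᵉ(μᵉ)ᵀ)`.  Then for every
`w ∈ ℝⁿ`, the supremum over all Borel probability measures `μ` on `ℝⁿ` with finite second
moments whose second-moment matrix is Loewner-dominated by `K` of
`∫∫ ⟨w, x + y⟩² d(law ε)(x) dμ(y)` equals
`E[⟨w, ε + δ⁰⟩²] + γ Σₑ ωᵉ (E[⟨w, ε + δᵉ⟩²] − E[⟨w, ε + δ⁰⟩²])`. -/
theorem stmt_3 {Ω : Type*} [MeasureSpace Ω] [IsProbabilityMeasure (ℙ : Measure Ω)]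
    {n : ℕ} {E : Type*} [Fintype E] (e₀ : E)
    (ε : Ω → (Fin n → ℝ)) (δ : E → Ω → (Fin n → ℝ))
    (hεm : Measurable ε) (hδm : ∀ e, Measurable (δ e))
    (hδ0 : ∀ᵐ ω ∂ℙ, δ e₀ ω = 0)
    (hεmean : ∀ i, ∫ ω, ε ω i = 0)
    (hε2 : ∀ i, MemLp (fun ω => ε ω i) 2 ℙ)
    (hδ2 : ∀ e i, MemLp (fun ω => δ e ω i) 2 ℙ)
    (hindep : ∀ e, IndepFun ε (δ e) ℙ)
    (w' : E → ℝ) (hw'pos : ∀ e, 0 < w' e) (hw'sum : ∑ e, w' e = 1)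
    (γ : ℝ) (hγ : 0 ≤ γ)
    (μe : E → (Fin n → ℝ)) (hμe : ∀ e i, μe e i = ∫ ω, δ e ω i)
    (S : E → Matrix (Fin n) (Fin n) ℝ)
    (hS : ∀ e i j, S e i j = ∫ ω, (δ e ω i - μe e i) * (δ e ω j - μe e j))
    (K : Matrix (Fin n) (Fin n) ℝ)
    (hK : K = S e₀ + γ • ∑ e, w' e • (S e - S e₀ + Matrix.of fun i j => μe e i * μe e j)) :
    ∀ w : Fin n → ℝ,
      sSup {r : ℝ | ∃ μ : Measure (Fin n → ℝ), IsProbabilityMeasure μ ∧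
          (∀ i, MemLp (fun y : Fin n → ℝ => y i) 2 μ) ∧
          (K - Matrix.of fun i j => ∫ y, y i * y j ∂μ).PosSemidef ∧
          r = ∫ y, ∫ ω, (w ⬝ᵥ (ε ω + y)) ^ 2 ∂ℙ ∂μ}
        = (∫ ω, (w ⬝ᵥ (ε ω + δ e₀ ω)) ^ 2)
          + γ * ∑ e, w' e * ((∫ ω, (w ⬝ᵥ (ε ω + δ e ω)) ^ 2)
              - ∫ ω, (w ⬝ᵥ (ε ω + δ e₀ ω)) ^ 2) := by
  intro w
  have hδint : ∀ e i, Integrable (fun ω => δ e ω i) ℙ := fun e i => (hδ2 e i).integrable one_le_two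
  have hεint : ∀ i, Integrable (fun ω => ε ω i) ℙ := fun i => (hε2 i).integrable one_le_two
  -- `δ e₀` vanishes a.s.
  have hμ0 : ∀ i, μe e₀ i = 0 := by
    intro i
    rw [hμe, integral_congr_ae (g := fun _ => (0 : ℝ)) (hδ0.mono fun ω h => by simp [h]),
      integral_zero]
  have hS0 : ∀ i j, S e₀ i j = 0 := by
    intro i j
    rw [hS, integral_congr_ae (g := fun _ => (0 : ℝ)) (hδ0.mono fun ω h => by simp [h, hμ0]),
      integral_zero]
  -- second moment identity
  have hSM : ∀ e i j, S e i j = (∫ ω, δ e ω i * δ e ω j) - μe e i * μe e j := by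
    intro e i j
    have key : ∀ ω, (δ e ω i - μe e i) * (δ e ω j - μe e j)
        = δ e ω i * δ e ω j - (μe e i * δ e ω j + μe e j * δ e ω i) + μe e i * μe e j :=
      fun ω => by ring
    rw [hS]
    simp only [key]
    have h1 : Integrable (fun ω => δ e ω i * δ e ω j) ℙ := l2_mul_int (hδ2 e i) (hδ2 e j)
    have h2 : Integrable (fun ω => μe e i * δ e ω j + μe e j * δ e ω i) ℙ :=
      ((hδint e j).const_mul _).add ((hδint e i).const_mul _)
    have h12 : Integrable (fun ω => δ e ω i * δ e ω j
        - (μe e i * δ e ω j + μe e j * δ e ω i)) ℙ := h1.sub h2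
    rw [integral_add h12 (integrable_const _), integral_sub h1 h2,
      integral_add ((hδint e j).const_mul _) ((hδint e i).const_mul _),
      MeasureTheory.integral_const_mul, MeasureTheory.integral_const_mul, integral_const]
    simp only [← hμe, measure_univ, probReal_univ, ENNReal.toReal_one, one_smul]
    ring
  -- `K` in terms of the raw second moments
  have hKM : ∀ i j, K i j = γ * ∑ e, w' e * ∫ ω, δ e ω i * δ e ω j := by
    intro i j
    rw [hK]
    simp only [Matrix.add_apply, Matrix.smul_apply, Matrix.sum_apply, Matrix.sub_apply,
      Matrix.of_apply, smul_eq_mul]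
    rw [hS0]
    simp only [hSM]
    rw [zero_add]
    congr 1
    exact Finset.sum_congr rfl fun e _ => by ring
  -- quadratic form of `K`
  have hQK : ∀ v : Fin n → ℝ, v ⬝ᵥ (K *ᵥ v) = γ * ∑ e, w' e * ∫ ω, (v ⬝ᵥ δ e ω) ^ 2 := by
    intro v
    rw [dot_mulVec_sum]
    have h1 : ∀ i j, v i * v j * K i j
        = ∑ e, γ * (w' e * (v i * v j * ∫ ω, δ e ω i * δ e ω j)) := by
      intro i j
      rw [hKM, Finset.mul_sum, Finset.mul_sum]
      exact Finset.sum_congr rfl fun e _ => by ring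
    have h2 : ∀ e : E, (∫ ω, (v ⬝ᵥ δ e ω) ^ 2)
        = ∑ i, ∑ j, v i * v j * ∫ ω, δ e ω i * δ e ω j :=
      fun e => int_dot_sq ℙ v (δ e) (hδ2 e)
    simp only [h1, h2, Finset.mul_sum]
    calc ∑ i, ∑ j, ∑ e : E, γ * (w' e * (v i * v j * ∫ ω, δ e ω i * δ e ω j))
        = ∑ i, ∑ e : E, ∑ j, γ * (w' e * (v i * v j * ∫ ω, δ e ω i * δ e ω j)) :=
          Finset.sum_congr rfl fun i _ => Finset.sum_comm
      _ = ∑ e : E, ∑ i, ∑ j, γ * (w' e * (v i * v j * ∫ ω, δ e ω i * δ e ω j)) :=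
          Finset.sum_comm
  have hQKnn : ∀ v : Fin n → ℝ, 0 ≤ v ⬝ᵥ (K *ᵥ v) := by
    intro v
    rw [hQK]
    exact mul_nonneg hγ (Finset.sum_nonneg fun e _ =>
      mul_nonneg (hw'pos e).le (integral_nonneg fun ω => sq_nonneg _))
  have hKe : ∀ i j, K i j = K j i := by
    intro i j
    rw [hKM, hKM]
    congr 1
    refine Finset.sum_congr rfl fun e _ => ?_
    congr 1
    exact integral_congr_ae (Filter.Eventually.of_forall fun ω => mul_comm _ _)
  have hKsymm : ∀ x v : Fin n → ℝ, x ⬝ᵥ (K *ᵥ v) = v ⬝ᵥ (K *ᵥ x) := by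
    intro x v
    rw [dot_mulVec_sum, dot_mulVec_sum, Finset.sum_comm]
    refine Finset.sum_congr rfl fun i _ => Finset.sum_congr rfl fun j _ => ?_
    rw [hKe]
    ring
  -- Cauchy-Schwarz for the PSD form of K
  have hCS : ∀ x : Fin n → ℝ,
      (x ⬝ᵥ (K *ᵥ w)) ^ 2 ≤ (x ⬝ᵥ (K *ᵥ x)) * (w ⬝ᵥ (K *ᵥ w)) := by
    intro x
    have hquad : ∀ t : ℝ,
        0 ≤ (w ⬝ᵥ (K *ᵥ w)) * (t * t) + (2 * (x ⬝ᵥ (K *ᵥ w))) * t + (x ⬝ᵥ (K *ᵥ x)) := by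
      intro t
      have h := hQKnn (x + t • w)
      have hexp : (x + t • w) ⬝ᵥ (K *ᵥ (x + t • w))
          = (w ⬝ᵥ (K *ᵥ w)) * (t * t) + (2 * (x ⬝ᵥ (K *ᵥ w))) * t + (x ⬝ᵥ (K *ᵥ x)) := by
        simp only [Matrix.mulVec_add, Matrix.mulVec_smul, dotProduct_add,
          add_dotProduct, dotProduct_smul, smul_dotProduct, smul_eq_mul]
        rw [hKsymm w x]
        ring
      linarith [hexp ▸ h]
    have hd := discrim_le_zero hquad
    rw [discrim] at hd
    nlinarith [hd]
  -- fix w; main quantities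
  have hwε2 : MemLp (fun ω => w ⬝ᵥ ε ω) 2 ℙ := dot_memℒp w ε hε2
  have hεdot : ∫ ω, w ⬝ᵥ ε ω = 0 := by
    have h : (fun ω => w ⬝ᵥ ε ω) = fun ω => ∑ i, w i * ε ω i := by
      funext ω; simp [dotProduct]
    rw [h, integral_finset_sum _ fun i _ => (hεint i).const_mul _]
    simp only [MeasureTheory.integral_const_mul, hεmean, mul_zero, Finset.sum_const_zero]
  have hinner : ∀ y : Fin n → ℝ,
      (∫ ω, (w ⬝ᵥ (ε ω + y)) ^ 2) = (∫ ω, (w ⬝ᵥ ε ω) ^ 2) + (w ⬝ᵥ y) ^ 2 := by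
    intro y
    have hy : MemLp (fun _ : Ω => w ⬝ᵥ y) 2 ℙ := memLp_const _
    have hfg : Integrable (fun ω => (w ⬝ᵥ ε ω) * (w ⬝ᵥ y)) ℙ :=
      (hwε2.integrable one_le_two).mul_const _
    have key : ∀ ω, (w ⬝ᵥ (ε ω + y)) ^ 2 = ((w ⬝ᵥ ε ω) + (w ⬝ᵥ y)) ^ 2 := fun ω => by
      rw [dotProduct_add]
    simp only [key]
    rw [exp_sq_add hwε2 hy hfg, MeasureTheory.integral_mul_const, hεdot, integral_const]
    simp [measure_univ]
  have hmdot : Measurable fun v : Fin n → ℝ => w ⬝ᵥ v := by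
    have h : (fun v : Fin n → ℝ => w ⬝ᵥ v) = fun v => ∑ i, w i * v i := by
      funext v; simp [dotProduct]
    rw [h]
    exact Finset.measurable_sum _ fun i _ => measurable_const.mul (measurable_pi_apply i)
  have hRe : ∀ e, (∫ ω, (w ⬝ᵥ (ε ω + δ e ω)) ^ 2)
      = (∫ ω, (w ⬝ᵥ ε ω) ^ 2) + ∫ ω, (w ⬝ᵥ δ e ω) ^ 2 := by
    intro e
    have hδdot2 : MemLp (fun ω => w ⬝ᵥ δ e ω) 2 ℙ := dot_memℒp w (δ e) (hδ2 e)
    have hfg : Integrable (fun ω => (w ⬝ᵥ ε ω) * (w ⬝ᵥ δ e ω)) ℙ := l2_mul_int hwε2 hδdot2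
    have key : ∀ ω, (w ⬝ᵥ (ε ω + δ e ω)) ^ 2 = ((w ⬝ᵥ ε ω) + (w ⬝ᵥ δ e ω)) ^ 2 := fun ω => by
      rw [dotProduct_add]
    simp only [key]
    rw [exp_sq_add hwε2 hδdot2 hfg]
    have hind : IndepFun (fun ω => w ⬝ᵥ ε ω) (fun ω => w ⬝ᵥ δ e ω) ℙ :=
      (hindep e).comp hmdot hmdot
    have hcross : (∫ ω, (w ⬝ᵥ ε ω) * (w ⬝ᵥ δ e ω))
        = (∫ ω, w ⬝ᵥ ε ω) * ∫ ω, w ⬝ᵥ δ e ω :=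
      hind.integral_fun_mul_eq_mul_integral hwε2.aestronglyMeasurable hδdot2.aestronglyMeasurable
    rw [hcross, hεdot, zero_mul]
    ring
  have hR0 : (∫ ω, (w ⬝ᵥ (ε ω + δ e₀ ω)) ^ 2) = ∫ ω, (w ⬝ᵥ ε ω) ^ 2 :=
    integral_congr_ae (hδ0.mono fun ω h => by simp [h])
  have hc0 : 0 ≤ w ⬝ᵥ (K *ᵥ w) := hQKnn w
  -- the right hand side equals T + wᵀ K w
  have hRHS : (∫ ω, (w ⬝ᵥ (ε ω + δ e₀ ω)) ^ 2)
      + γ * ∑ e, w' e * ((∫ ω, (w ⬝ᵥ (ε ω + δ e ω)) ^ 2)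
          - ∫ ω, (w ⬝ᵥ (ε ω + δ e₀ ω)) ^ 2)
      = (∫ ω, (w ⬝ᵥ ε ω) ^ 2) + w ⬝ᵥ (K *ᵥ w) := by
    rw [hR0, hQK w]
    simp only [hRe]
    congr 2
    exact Finset.sum_congr rfl fun e _ => by ring
  rw [hRHS]
  -- an optimal direction a
  obtain ⟨a, ha1, ha2⟩ : ∃ a : Fin n → ℝ, (w ⬝ᵥ a) ^ 2 = w ⬝ᵥ (K *ᵥ w) ∧
      ∀ x : Fin n → ℝ, (x ⬝ᵥ a) ^ 2 ≤ x ⬝ᵥ (K *ᵥ x) := by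
    rcases eq_or_lt_of_le hc0 with h0 | hpos
    · refine ⟨0, ?_, ?_⟩
      · simp only [dotProduct_zero]
        simpa using h0
      · intro x
        simpa [dotProduct_zero] using hQKnn x
    · have hcinv : (Real.sqrt (w ⬝ᵥ (K *ᵥ w)))⁻¹ ^ 2 = (w ⬝ᵥ (K *ᵥ w))⁻¹ := by
        rw [← Real.sqrt_inv, Real.sq_sqrt (inv_nonneg.2 hc0)]
      refine ⟨(Real.sqrt (w ⬝ᵥ (K *ᵥ w)))⁻¹ • (K *ᵥ w), ?_, ?_⟩
      · rw [dotProduct_smul, smul_eq_mul, mul_pow, hcinv, sq, ← mul_assoc,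
          inv_mul_cancel₀ hpos.ne', one_mul]
      · intro x
        rw [dotProduct_smul, smul_eq_mul, mul_pow, hcinv]
        have h5 : (w ⬝ᵥ (K *ᵥ w))⁻¹ * ((x ⬝ᵥ (K *ᵥ w)) ^ 2)
            ≤ (w ⬝ᵥ (K *ᵥ w))⁻¹ * ((x ⬝ᵥ (K *ᵥ x)) * (w ⬝ᵥ (K *ᵥ w))) :=
          mul_le_mul_of_nonneg_left (hCS x) (inv_nonneg.2 hc0)
        have h6 : (w ⬝ᵥ (K *ᵥ w))⁻¹ * ((x ⬝ᵥ (K *ᵥ x)) * (w ⬝ᵥ (K *ᵥ w)))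
            = x ⬝ᵥ (K *ᵥ x) := by
          field_simp
        linarith
  -- the supremum value is attained at the Dirac measure at a
  have hmem : ((∫ ω, (w ⬝ᵥ ε ω) ^ 2) + w ⬝ᵥ (K *ᵥ w)) ∈
      {r : ℝ | ∃ μ : Measure (Fin n → ℝ), IsProbabilityMeasure μ ∧
        (∀ i, MemLp (fun y : Fin n → ℝ => y i) 2 μ) ∧
        (K - Matrix.of fun i j => ∫ y, y i * y j ∂μ).PosSemidef ∧
        r = ∫ y, ∫ ω, (w ⬝ᵥ (ε ω + y)) ^ 2 ∂ℙ ∂μ} := by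
    refine ⟨Measure.dirac a, Measure.dirac.isProbabilityMeasure, ?_, ?_, ?_⟩
    · intro i
      refine (memLp_const (a i)).ae_eq ?_
      rw [Filter.EventuallyEq, ae_dirac_eq]
      exact Filter.eventually_pure.2 rfl
    · have hM : (Matrix.of fun i j => ∫ y, y i * y j ∂(Measure.dirac a))
          = Matrix.of fun i j => a i * a j := by
        ext i j
        simp only [Matrix.of_apply]
        exact integral_dirac _ a
      rw [hM]
      refine Matrix.PosSemidef.of_dotProduct_mulVec_nonneg ?_ ?_
      · ext i j
        simp only [Matrix.conjTranspose_apply, Matrix.sub_apply, Matrix.of_apply, star_trivial]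
        rw [hKe j i]
        ring
      · intro x
        rw [star_trivial, Matrix.sub_mulVec, dotProduct_sub, rank1_quad]
        have := ha2 x
        linarith
    · rw [integral_dirac (fun y => ∫ ω, (w ⬝ᵥ (ε ω + y)) ^ 2 ∂ℙ) a, hinner a, ha1]
  -- upper bound
  have hub : ∀ r ∈ {r : ℝ | ∃ μ : Measure (Fin n → ℝ), IsProbabilityMeasure μ ∧
      (∀ i, MemLp (fun y : Fin n → ℝ => y i) 2 μ) ∧
      (K - Matrix.of fun i j => ∫ y, y i * y j ∂μ).PosSemidef ∧
      r = ∫ y, ∫ ω, (w ⬝ᵥ (ε ω + y)) ^ 2 ∂ℙ ∂μ},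
      r ≤ (∫ ω, (w ⬝ᵥ ε ω) ^ 2) + w ⬝ᵥ (K *ᵥ w) := by
    rintro r ⟨μ, hμp, hμ2, hPSD, hrv⟩
    have hdotμ : MemLp (fun y : Fin n → ℝ => w ⬝ᵥ y) 2 μ := dot_memℒp w (fun y => y) hμ2
    have h1 : r = (∫ ω, (w ⬝ᵥ ε ω) ^ 2) + ∫ y, (w ⬝ᵥ y) ^ 2 ∂μ := by
      rw [hrv]
      simp only [hinner]
      rw [integral_add (integrable_const _) hdotμ.integrable_sq, integral_const]
      simp [measure_univ]
    have h2 : ∫ y, (w ⬝ᵥ y) ^ 2 ∂μ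
        = w ⬝ᵥ ((Matrix.of fun i j => ∫ y, y i * y j ∂μ) *ᵥ w) := by
      rw [int_dot_sq μ w (fun y => y) hμ2, dot_mulVec_sum]
      simp only [Matrix.of_apply]
    have h3 : w ⬝ᵥ ((Matrix.of fun i j => ∫ y, y i * y j ∂μ) *ᵥ w) ≤ w ⬝ᵥ (K *ᵥ w) := by
      have h := hPSD.dotProduct_mulVec_nonneg w
      simp only [star_trivial] at h
      rw [Matrix.sub_mulVec, dotProduct_sub] at h
      linarith
    rw [h1, h2]
    linarith
  refine le_antisymm (Real.sSup_le hub ?_) (le_csSup ⟨_, hub⟩ hmem)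
  exact add_nonneg (integral_nonneg fun ω => sq_nonneg _) hc0
end

section
/- Let G be a random vector in ℝᵖ whose law is the standard Gaussian measure on ℝᵖ (the p-fold product of the standard normal distribution on ℝ). Let μ ∈ ℝ^d, let A be a real d×p matrix, set X = μ + AG and Σ = AAᵀ, and let M be a real k×d matrix such that MΣMᵀ is invertible. Then, almost surely, the conditional expectation of X given the σ-algebra generated by MX is E[X | σ(MX)] = ΣMᵀ(MΣMᵀ)⁻¹ MX + (I − ΣMᵀ(MΣMᵀ)⁻¹M) μ; in particular E[X | σ(MX)] is an affine function of MX. -/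
open scoped Matrix
open MeasureTheory ProbabilityTheory

namespace Stmt7Aux

open Real

noncomputable def stdG (p : ℕ) : Measure (Fin p → ℝ) :=
  Measure.pi fun _ : Fin p => gaussianReal 0 1

instance (p : ℕ) : IsProbabilityMeasure (stdG p) := by
  unfold stdG; infer_instance

lemma measurable_dot {p : ℕ} (v : Fin p → ℝ) :
    Measurable fun x : Fin p → ℝ => v ⬝ᵥ x := by
  simp only [dotProduct]
  exact Finset.measurable_sum _ fun i _ => (measurable_pi_apply i).const_mul _

lemma measurable_mulVec {k p : ℕ} (T : Matrix (Fin k) (Fin p) ℝ) :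
    Measurable fun x : Fin p → ℝ => T.mulVec x :=
  measurable_pi_lambda _ fun i => measurable_dot (T i)

lemma lintegral_pi_prod :
    ∀ (n : ℕ) (μ : Fin n → Measure ℝ), (∀ i, SigmaFinite (μ i)) →
      ∀ (g : Fin n → ℝ → ENNReal), (∀ i, Measurable (g i)) →
      ∫⁻ x : Fin n → ℝ, ∏ i, g i (x i) ∂Measure.pi μ = ∏ i, ∫⁻ t, g i t ∂μ i := by
  intro n
  induction n with
  | zero =>
    intro μ _ g _
    rw [Measure.pi_of_empty]
    simp
  | succ n ih =>
    intro μ hμ g hg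
    haveI := hμ
    have hF : Measurable fun x : Fin (n + 1) → ℝ => ∏ i, g i (x i) :=
      Finset.measurable_prod _ fun i _ => (hg i).comp (measurable_pi_apply i)
    have h1 := (((measurePreserving_piFinSuccAbove μ 0).symm _).lintegral_comp hF).symm
    simp only [Fin.zero_succAbove] at h1
    have h2 : ∀ y : ℝ × (Fin n → ℝ),
        (∏ i, g i (((MeasurableEquiv.piFinSuccAbove (fun _ : Fin (n+1) => ℝ) 0).symm y) i))
          = g 0 y.1 * ∏ j, g (Fin.succ j) (y.2 j) := by
      intro y
      simp_rw [MeasurableEquiv.piFinSuccAbove_symm_apply, Fin.insertNthEquiv,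
        Fin.prod_univ_succ, Fin.insertNth_zero]
      simp [Fin.zero_succAbove, Function.comp_def, Fin.cons_zero, Fin.cons_succ,
        Equiv.coe_fn_mk]
    rw [h1, lintegral_congr h2]
    have h3 := lintegral_prod_mul (μ := μ 0) (ν := Measure.pi fun j => μ (Fin.succ j))
      (f := g 0) (g := fun z : Fin n → ℝ => ∏ j, g (Fin.succ j) (z j))
      (hg 0).aemeasurable
      (Finset.measurable_prod _ fun j _ =>
        ((hg _).comp (measurable_pi_apply j))).aemeasurable
    rw [h3, ih _ (fun j => inferInstance) _ (fun j => hg _), Fin.prod_univ_succ]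

lemma stdG_eq_withDensity (p : ℕ) :
    stdG p = (volume : Measure (Fin p → ℝ)).withDensity
      fun x => ∏ i, gaussianPDF 0 1 (x i) := by
  refine Measure.pi_eq fun s hs => ?_
  rw [withDensity_apply _ (MeasurableSet.univ_pi hs),
    ← lintegral_indicator (MeasurableSet.univ_pi hs)]
  have hind : ∀ x : Fin p → ℝ,
      (Set.univ.pi s).indicator (fun x => ∏ i, gaussianPDF 0 1 (x i)) x
        = ∏ i, (s i).indicator (gaussianPDF 0 1) (x i) := by
    intro x
    by_cases hx : x ∈ Set.univ.pi s
    · rw [Set.indicator_of_mem hx]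
      exact Finset.prod_congr rfl fun i _ =>
        (Set.indicator_of_mem (hx i (Set.mem_univ i)) _).symm
    · rw [Set.indicator_of_notMem hx]
      obtain ⟨i, hi⟩ : ∃ i, x i ∉ s i := by
        by_contra h
        push_neg at h
        exact hx fun i _ => h i
      exact (Finset.prod_eq_zero (Finset.mem_univ i)
        (Set.indicator_of_notMem hi _)).symm
  rw [lintegral_congr hind, volume_pi,
    lintegral_pi_prod p (fun _ => volume) (fun _ => inferInstance) _
      (fun i => (measurable_gaussianPDF 0 1).indicator (hs i))]
  refine Finset.prod_congr rfl fun i _ => ?_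
  rw [lintegral_indicator (hs i), gaussianReal_apply 0 one_ne_zero]

/-- The reflection in the hyperplane orthogonal to `v`. -/
noncomputable def refl {p : ℕ} (v : Fin p → ℝ) : (Fin p → ℝ) →ₗ[ℝ] (Fin p → ℝ) where
  toFun x := x - (2 * (v ⬝ᵥ x) / (v ⬝ᵥ v)) • v
  map_add' x y := by
    funext i
    simp only [dotProduct_add, Pi.add_apply, Pi.sub_apply, Pi.smul_apply, smul_eq_mul]
    ring
  map_smul' c x := by
    funext i
    simp only [dotProduct_smul, Pi.sub_apply, Pi.smul_apply, smul_eq_mul,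
      RingHom.id_apply]
    ring

lemma refl_apply {p : ℕ} (v x : Fin p → ℝ) :
    refl v x = x - (2 * (v ⬝ᵥ x) / (v ⬝ᵥ v)) • v := rfl

lemma dot_refl {p : ℕ} (v x : Fin p → ℝ) (hv : v ⬝ᵥ v ≠ 0) :
    v ⬝ᵥ refl v x = -(v ⬝ᵥ x) := by
  rw [refl_apply, dotProduct_sub, dotProduct_smul, smul_eq_mul]
  field_simp
  ring

lemma dot_refl_of_orth {p : ℕ} (v w x : Fin p → ℝ) (hw : w ⬝ᵥ v = 0) :
    w ⬝ᵥ refl v x = w ⬝ᵥ x := by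
  rw [refl_apply, dotProduct_sub, dotProduct_smul, smul_eq_mul, hw]
  ring

lemma refl_refl {p : ℕ} (v : Fin p → ℝ) (hv : v ⬝ᵥ v ≠ 0) (x : Fin p → ℝ) :
    refl v (refl v x) = x := by
  rw [refl_apply, dot_refl v x hv, refl_apply]
  funext i
  simp only [Pi.sub_apply, Pi.smul_apply, smul_eq_mul]
  field_simp
  ring

lemma dot_self_refl {p : ℕ} (v : Fin p → ℝ) (hv : v ⬝ᵥ v ≠ 0) (x : Fin p → ℝ) :
    refl v x ⬝ᵥ refl v x = x ⬝ᵥ x := by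
  rw [refl_apply, dotProduct_sub, sub_dotProduct, sub_dotProduct,
    dotProduct_smul, smul_dotProduct, smul_dotProduct,
    dotProduct_smul]
  simp only [smul_eq_mul]
  rw [dotProduct_comm x v]
  field_simp
  ring

lemma measurable_refl {p : ℕ} (v : Fin p → ℝ) : Measurable (refl v) :=
  (LinearMap.continuous_on_pi _).measurable

lemma map_refl_volume {p : ℕ} (v : Fin p → ℝ) (hv : v ⬝ᵥ v ≠ 0) :
    Measure.map (refl v) (volume : Measure (Fin p → ℝ)) = volume := by
  have hcomp : (refl v) ∘ₗ (refl v) = LinearMap.id := by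
    apply LinearMap.ext
    intro x
    exact refl_refl v hv x
  have hdet : LinearMap.det (refl v) * LinearMap.det (refl v) = 1 := by
    rw [← LinearMap.det_comp, hcomp, LinearMap.det_id]
  have hdet0 : LinearMap.det (refl v) ≠ 0 := by
    intro h
    rw [h, mul_zero] at hdet
    exact zero_ne_one hdet
  have habs : |(LinearMap.det (refl v))⁻¹| = 1 := by
    have h1 : |LinearMap.det (refl v)| = 1 := by
      have := mul_self_eq_one_iff.mp (by rw [← abs_mul, hdet, abs_one] : 
        |LinearMap.det (refl v)| * |LinearMap.det (refl v)| = 1)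
      rcases this with h | h
      · exact h
      · exfalso; have := abs_nonneg (LinearMap.det (refl v)); linarith
    rw [abs_inv, h1]
    norm_num
  rw [Real.map_linearMap_volume_pi_eq_smul_volume_pi hdet0, habs]
  simp

lemma prod_gaussianPDF_eq {p : ℕ} (x : Fin p → ℝ) :
    (∏ i, gaussianPDF 0 1 (x i))
      = ENNReal.ofReal ((√(2 * π))⁻¹ ^ p * rexp (-(x ⬝ᵥ x) / 2)) := by
  have hpdf : ∀ t : ℝ, gaussianPDFReal 0 1 t = (√(2 * π))⁻¹ * rexp (-(t * t) / 2) := by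
    intro t
    simp only [gaussianPDFReal, NNReal.coe_one, mul_one, sub_zero]
    ring_nf
  have : (√(2 * π))⁻¹ ^ p * rexp (-(x ⬝ᵥ x) / 2) = ∏ i, gaussianPDFReal 0 1 (x i) := by
    simp_rw [hpdf]
    rw [Finset.prod_mul_distrib, Finset.prod_const, ← Real.exp_sum]
    congr 2
    · simp [Finset.card_univ]
    · rw [dotProduct, neg_div, ← Finset.sum_div, Finset.sum_neg_distrib, neg_div]
  rw [this, ENNReal.ofReal_prod_of_nonneg fun i _ => gaussianPDFReal_nonneg 0 1 (x i)]
  simp [gaussianPDF_def]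

lemma map_refl_stdG {p : ℕ} (v : Fin p → ℝ) (hv : v ⬝ᵥ v ≠ 0) :
    Measure.map (refl v) (stdG p) = stdG p := by
  have hφm : Measurable fun x : Fin p → ℝ => ∏ i, gaussianPDF 0 1 (x i) :=
    Finset.measurable_prod _ fun i _ =>
      (measurable_gaussianPDF 0 1).comp (measurable_pi_apply i)
  have hφR : ∀ x : Fin p → ℝ,
      (∏ i, gaussianPDF 0 1 (refl v x i)) = ∏ i, gaussianPDF 0 1 (x i) := by
    intro x
    rw [prod_gaussianPDF_eq, prod_gaussianPDF_eq, dot_self_refl v hv x]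
  have hRm := measurable_refl v
  refine Measure.ext fun s hs => ?_
  rw [Measure.map_apply hRm hs, stdG_eq_withDensity, withDensity_apply _ (hRm hs),
    withDensity_apply _ hs]
  have h := setLIntegral_map (μ := (volume : Measure (Fin p → ℝ)))
    (f := fun x : Fin p → ℝ => ∏ i, gaussianPDF 0 1 (x i)) hs hφm hRm
  rw [map_refl_volume v hv] at h
  exact Eq.trans (setLIntegral_congr_fun (hRm hs)
    (fun x _ => (hφR x).symm)) h.symm

lemma integral_dot_indicator_zero {p k : ℕ} (W : Matrix (Fin k) (Fin p) ℝ)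
    (v : Fin p → ℝ) (hvW : ∀ j, W j ⬝ᵥ v = 0) {B : Set (Fin k → ℝ)}
    (hB : MeasurableSet B) :
    ∫ x in (fun x => W.mulVec x) ⁻¹' B, (v ⬝ᵥ x) ∂(stdG p) = 0 := by
  by_cases hv : v = 0
  · simp [hv, zero_dotProduct]
  have hq : v ⬝ᵥ v ≠ 0 := fun h => hv (dotProduct_self_eq_zero.mp h)
  have hS : MeasurableSet ((fun x => W.mulVec x) ⁻¹' B) := measurable_mulVec W hB
  set S := (fun x => W.mulVec x) ⁻¹' B with hSdef
  set F := S.indicator fun x : Fin p → ℝ => v ⬝ᵥ x with hF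
  have hFm : Measurable F := (measurable_dot v).indicator hS
  have hmemR : ∀ x, refl v x ∈ S ↔ x ∈ S := by
    intro x
    have : W.mulVec (refl v x) = W.mulVec x := by
      funext j
      exact dot_refl_of_orth v (W j) x (hvW j)
    simp [hSdef, Set.mem_preimage, this]
  have hFR : ∀ x, F (refl v x) = -F x := by
    intro x
    by_cases hx : x ∈ S
    · rw [hF]
      rw [Set.indicator_of_mem ((hmemR x).mpr hx), Set.indicator_of_mem hx,
        dot_refl v x hq]
    · rw [hF]
      rw [Set.indicator_of_notMem (fun h => hx ((hmemR x).mp h)),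
        Set.indicator_of_notMem hx, neg_zero]
  have h1 : ∫ x, F x ∂(stdG p) = ∫ x, F (refl v x) ∂(stdG p) := by
    conv_lhs => rw [← map_refl_stdG v hq]
    exact integral_map (measurable_refl v).aemeasurable
      hFm.stronglyMeasurable.aestronglyMeasurable
  rw [← integral_indicator hS, ← hF]
  have h2 : ∫ x, F (refl v x) ∂(stdG p) = -∫ x, F x ∂(stdG p) := by
    simp_rw [hFR]
    exact integral_neg F
  rw [h2] at h1
  linarith

lemma map_eval_stdG {p : ℕ} (i : Fin p) :
    Measure.map (fun x : Fin p → ℝ => x i) (stdG p) = gaussianReal 0 1 := by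
  refine Measure.ext fun s hs => ?_
  rw [Measure.map_apply (measurable_pi_apply i) hs]
  have : (fun x : Fin p → ℝ => x i) ⁻¹' s
      = Set.univ.pi (Function.update (fun _ => Set.univ) i s) := Set.eval_preimage
  rw [this]
  unfold stdG
  rw [Measure.pi_pi]
  rw [Finset.prod_eq_single i (fun b _ hbi => by
      simp [Function.update_of_ne hbi]) (fun h => absurd (Finset.mem_univ i) h)]
  simp

lemma integrable_id_gaussian : Integrable (fun x : ℝ => x) (gaussianReal 0 1) := by
  rw [gaussianReal_of_var_ne_zero 0 one_ne_zero]
  rw [integrable_withDensity_iff (measurable_gaussianPDF 0 1)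
    (ae_of_all _ fun x => ENNReal.ofReal_lt_top)]
  have heq : ∀ x : ℝ, x * (gaussianPDF 0 1 x).toReal
      = (√(2 * π))⁻¹ * (x * rexp (-(2⁻¹) * x ^ 2)) := by
    intro x
    rw [gaussianPDF_def, ENNReal.toReal_ofReal (gaussianPDFReal_nonneg 0 1 x)]
    simp only [gaussianPDFReal, NNReal.coe_one, mul_one, sub_zero]
    ring_nf
  simp_rw [heq]
  exact (integrable_mul_exp_neg_mul_sq (by norm_num : (0:ℝ) < 2⁻¹)).const_mul _

lemma integrable_eval {p : ℕ} (i : Fin p) :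
    Integrable (fun x : Fin p → ℝ => x i) (stdG p) := by
  have h := integrable_id_gaussian
  rw [← map_eval_stdG (p := p) i] at h
  exact (integrable_map_measure measurable_id.stronglyMeasurable.aestronglyMeasurable
    (measurable_pi_apply i).aemeasurable).mp h

lemma integrable_dot {p : ℕ} (v : Fin p → ℝ) :
    Integrable (fun x : Fin p → ℝ => v ⬝ᵥ x) (stdG p) := by
  have : (fun x : Fin p → ℝ => v ⬝ᵥ x) = fun x => ∑ i, v i * x i := by
    funext x; rfl
  rw [this]
  exact integrable_finset_sum _ fun i _ => (integrable_eval i).const_mul _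

lemma continuous_pi_single {m : ℕ} (i : Fin m) : Continuous (Pi.single (M := fun _ : Fin m => ℝ) i) := by
  apply continuous_pi
  intro j
  by_cases hji : j = i
  · subst hji
    simpa using continuous_id'
  · simp only [Pi.single_apply]
    simp only [hji]
    have : ∀ t : ℝ, (if j = i then t else 0) = 0 := fun t => by simp [hji]
    simpa [this] using continuous_const

lemma integrable_pi_of_coords {α : Type*} [MeasurableSpace α] {μ : Measure α}
    {m : ℕ} {f : α → Fin m → ℝ} (hf : ∀ i, Integrable (fun a => f a i) μ) :
    Integrable f μ := by
  have hrw : f = fun a => ∑ i, Pi.single i (f a i) := by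
    funext a
    rw [Finset.univ_sum_single (f a)]
  rw [hrw]
  refine integrable_finset_sum _ fun i _ => ?_
  have hm : AEStronglyMeasurable (fun a => Pi.single (M := fun _ : Fin m => ℝ) i (f a i)) μ :=
    (continuous_pi_single i).comp_aestronglyMeasurable (hf i).aestronglyMeasurable
  refine (hf i).norm.mono' hm (ae_of_all _ fun a => ?_)
  rw [Pi.norm_single]

lemma integrable_affine {p m : ℕ} (c : Fin m → ℝ) (T : Matrix (Fin m) (Fin p) ℝ) :
    Integrable (fun x : Fin p → ℝ => c + T.mulVec x) (stdG p) := by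
  refine integrable_pi_of_coords fun i => ?_
  have : (fun x : Fin p → ℝ => (c + T.mulVec x) i) = fun x => c i + T i ⬝ᵥ x := by
    funext x; rfl
  rw [this]
  exact (integrable_const (c i)).add (integrable_dot (T i))

lemma integrable_mulVec {p m : ℕ} (T : Matrix (Fin m) (Fin p) ℝ) :
    Integrable (fun x : Fin p → ℝ => T.mulVec x) (stdG p) :=
  integrable_pi_of_coords fun i => integrable_dot (T i)

end Stmt7Aux

open Stmt7Aux

/-- Gaussian case of Lemma 3: Let `G` be a standard Gaussian random vector in
`ℝᵖ`, `X = μ + A G`, `Σ = A Aᵀ`, and `M` a real `k × d` matrix with `M Σ Mᵀ` invertible.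
Then, almost surely,
`E[X | σ(MX)] = Σ Mᵀ (M Σ Mᵀ)⁻¹ M X + (I − Σ Mᵀ (M Σ Mᵀ)⁻¹ M) μ`;
in particular the conditional expectation of `X` given `M X` is affine in `M X`. -/
theorem stmt_7 {Ω : Type*} [MeasureSpace Ω] [IsProbabilityMeasure (ℙ : Measure Ω)]
    {p d k : ℕ} (G : Ω → (Fin p → ℝ)) (hGm : Measurable G)
    (hGlaw : Measure.map G ℙ = Measure.pi fun _ : Fin p => gaussianReal 0 1)
    (μv : Fin d → ℝ) (A : Matrix (Fin d) (Fin p) ℝ)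
    (X : Ω → (Fin d → ℝ)) (hX : ∀ ω, X ω = μv + A.mulVec (G ω))
    (S : Matrix (Fin d) (Fin d) ℝ) (hSdef : S = A * Aᵀ)
    (M : Matrix (Fin k) (Fin d) ℝ) (hinv : IsUnit (M * S * Mᵀ)) :
    ℙ[X | MeasurableSpace.comap (fun ω => M.mulVec (X ω)) inferInstance]
      =ᵐ[ℙ] fun ω =>
        (S * Mᵀ * (M * S * Mᵀ)⁻¹).mulVec (M.mulVec (X ω))
          + (1 - S * Mᵀ * (M * S * Mᵀ)⁻¹ * M).mulVec μv := by
  classical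
  set C : Matrix (Fin d) (Fin k) ℝ := S * Mᵀ * (M * S * Mᵀ)⁻¹ with hC
  have hXfun : X = fun ω => μv + A.mulVec (G ω) := funext hX
  have hXm : Measurable X := by
    rw [hXfun]
    exact measurable_pi_lambda _ fun i => ((measurable_dot (A i)).comp hGm).const_add (μv i)
  have hMXm : Measurable fun ω => M.mulVec (X ω) := (measurable_mulVec M).comp hXm
  have hm : MeasurableSpace.comap (fun ω => M.mulVec (X ω)) inferInstance ≤ _ :=
    hMXm.comap_le
  haveI : SigmaFinite (Measure.trim ℙ hm) := by
    haveI := isFiniteMeasure_trim hm (μ := ℙ)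
    infer_instance
  -- matrix algebra
  have hdet : IsUnit (M * S * Mᵀ).det := (Matrix.isUnit_iff_isUnit_det _).mp hinv
  have hCinv : C * (M * S * Mᵀ) = S * Mᵀ := by
    rw [hC, Matrix.mul_assoc, Matrix.nonsing_inv_mul _ hdet, Matrix.mul_one]
  have hVW : ((1 - C * M) * A) * (M * A)ᵀ = 0 := by
    have e1 : (1 - C * M) * A * (Aᵀ * Mᵀ) = (1 - C * M) * (S * Mᵀ) := by
      rw [Matrix.mul_assoc, ← Matrix.mul_assoc A Aᵀ Mᵀ, ← hSdef]
    have e2 : (1 - C * M) * (S * Mᵀ) = S * Mᵀ - C * (M * S * Mᵀ) := by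
      rw [Matrix.sub_mul, Matrix.one_mul, Matrix.mul_assoc C M (S * Mᵀ)]
      congr 1
      rw [← Matrix.mul_assoc M S Mᵀ]
    rw [Matrix.transpose_mul, e1, e2, hCinv, sub_self]
  have hrow : ∀ (i : Fin d) (j : Fin k),
      ((M * A : Matrix (Fin k) (Fin p) ℝ) j)
        ⬝ᵥ (((1 - C * M) * A : Matrix (Fin d) (Fin p) ℝ) i) = 0 := by
    intro i j
    rw [dotProduct_comm]
    have h0 := congrFun (congrFun hVW i) j
    simpa [Matrix.mul_apply, Matrix.transpose_apply, dotProduct, mul_comm] using h0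
  -- the candidate function
  set g : Ω → Fin d → ℝ :=
    fun ω => C.mulVec (M.mulVec (X ω)) + (1 - C * M).mulVec μv with hg
  have hgfun : g = fun ω => ((C * M).mulVec μv + (1 - C * M).mulVec μv)
      + (C * M * A).mulVec (G ω) := by
    funext ω
    simp only [hg]
    rw [hX ω, Matrix.mulVec_mulVec, Matrix.mulVec_add, Matrix.mulVec_mulVec]
    abel
  have haff : ∀ (c : Fin d → ℝ) (T : Matrix (Fin d) (Fin p) ℝ),
      Integrable (fun ω => c + T.mulVec (G ω)) ℙ := by
    intro c T
    have h' : Integrable (fun x : Fin p → ℝ => c + T.mulVec x) (Measure.map G ℙ) := by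
      rw [hGlaw]
      exact integrable_affine c T
    exact (integrable_map_measure
      ((measurable_pi_lambda _ fun i =>
        (measurable_dot (T i)).const_add (c i)).stronglyMeasurable.aestronglyMeasurable)
      hGm.aemeasurable).mp h'
  have hXint : Integrable X ℙ := by rw [hXfun]; exact haff μv A
  have hgint : Integrable g ℙ := by rw [hgfun]; exact haff _ _
  -- measurability with respect to the comap σ-algebra
  have hgm' : AEStronglyMeasurable[
      MeasurableSpace.comap (fun ω => M.mulVec (X ω)) inferInstance] g ℙ := by
    have hbase : @Measurable Ω (Fin k → ℝ)
        (MeasurableSpace.comap (fun ω => M.mulVec (X ω)) inferInstance) _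
        (fun ω => M.mulVec (X ω)) := fun t ht => ⟨t, ht, rfl⟩
    have haffm : Measurable fun y : Fin k → ℝ =>
        C.mulVec y + (1 - C * M).mulVec μv :=
      measurable_pi_lambda _ fun i => (measurable_dot (C i)).add_const _
    have hmg : @Measurable Ω (Fin d → ℝ)
        (MeasurableSpace.comap (fun ω => M.mulVec (X ω)) inferInstance) _ g :=
      haffm.comp hbase
    exact (Measurable.stronglyMeasurable hmg).aestronglyMeasurable
  refine (ae_eq_condExp_of_forall_setIntegral_eq hm hXint
    (fun s _ _ => hgint.integrableOn) ?_ hgm').symm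
  intro s hs _
  obtain ⟨B, hB, rfl⟩ := hs
  have hdiff : ∀ ω, X ω - g ω = ((1 - C * M) * A).mulVec (G ω) := by
    intro ω
    simp only [hg]
    rw [hX ω, Matrix.mulVec_mulVec, Matrix.mulVec_add, Matrix.mulVec_mulVec,
      Matrix.sub_mul, Matrix.one_mul, Matrix.sub_mulVec, Matrix.sub_mulVec,
      Matrix.one_mulVec]
    abel
  have hB2 : MeasurableSet ((fun y : Fin k → ℝ => M.mulVec μv + y) ⁻¹' B) :=
    (measurable_pi_lambda _ fun j => (measurable_pi_apply j).const_add _) hB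
  have hS' : MeasurableSet ((fun x : Fin p → ℝ => (M * A).mulVec x) ⁻¹'
      ((fun y : Fin k → ℝ => M.mulVec μv + y) ⁻¹' B)) := measurable_mulVec _ hB2
  have hseteq : (fun ω => M.mulVec (X ω)) ⁻¹' B
      = G ⁻¹' ((fun x : Fin p → ℝ => (M * A).mulVec x) ⁻¹'
        ((fun y : Fin k → ℝ => M.mulVec μv + y) ⁻¹' B)) := by
    ext ω
    simp only [Set.mem_preimage]
    rw [hX ω, Matrix.mulVec_add, Matrix.mulVec_mulVec]
  have hint : Integrable (fun x : Fin p → ℝ => ((1 - C * M) * A).mulVec x) (stdG p) :=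
    integrable_mulVec _
  have hzero : ∫ ω in (fun ω => M.mulVec (X ω)) ⁻¹' B, (X ω - g ω) ∂ℙ = 0 := by
    have step1 : ∫ ω in (fun ω => M.mulVec (X ω)) ⁻¹' B, (X ω - g ω) ∂ℙ
        = ∫ x in (fun x : Fin p → ℝ => (M * A).mulVec x) ⁻¹'
            ((fun y : Fin k → ℝ => M.mulVec μv + y) ⁻¹' B),
            ((1 - C * M) * A).mulVec x ∂(stdG p) := by
      rw [hseteq]
      simp_rw [hdiff]
      have hsm : AEStronglyMeasurable
          (fun x : Fin p → ℝ => ((1 - C * M) * A).mulVec x) (Measure.map G ℙ) :=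
        (measurable_mulVec _).stronglyMeasurable.aestronglyMeasurable
      have h := setIntegral_map hS' hsm hGm.aemeasurable
      rw [hGlaw] at h
      exact h.symm
    rw [step1]
    funext i
    have hproj := (ContinuousLinearMap.proj (R := ℝ) (φ := fun _ : Fin d => ℝ)
      i).integral_comp_comm (hint.integrableOn
        (s := (fun x : Fin p → ℝ => (M * A).mulVec x) ⁻¹'
          ((fun y : Fin k → ℝ => M.mulVec μv + y) ⁻¹' B)))
    have hco : (∫ x in (fun x : Fin p → ℝ => (M * A).mulVec x) ⁻¹'
          ((fun y : Fin k → ℝ => M.mulVec μv + y) ⁻¹' B),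
          ((1 - C * M) * A).mulVec x ∂(stdG p)) i
        = ∫ x in (fun x : Fin p → ℝ => (M * A).mulVec x) ⁻¹'
            ((fun y : Fin k → ℝ => M.mulVec μv + y) ⁻¹' B),
            ((((1 - C * M) * A : Matrix (Fin d) (Fin p) ℝ)) i ⬝ᵥ x) ∂(stdG p) := by
      simpa [ContinuousLinearMap.proj_apply, Matrix.mulVec] using hproj.symm
    rw [hco, integral_dot_indicator_zero (M * A) _ (hrow i) hB2]
    simp
  have h : ∫ ω in (fun ω => M.mulVec (X ω)) ⁻¹' B, (X ω - g ω) ∂ℙ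
      = (∫ ω in (fun ω => M.mulVec (X ω)) ⁻¹' B, X ω ∂ℙ)
        - ∫ ω in (fun ω => M.mulVec (X ω)) ⁻¹' B, g ω ∂ℙ :=
    integral_sub hXint.integrableOn hgint.integrableOn
  rw [hzero] at h
  exact (sub_eq_zero.mp h.symm).symm
end
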